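/- The map F : 𝔹² → ℂ², F(z₁,z₂) = (0, −z₂/(1−z₁)), is an infinitesimal generator of a semigroup of holomorphic self-maps of 𝔹²: for each (z₁,z₂) ∈ 𝔹² the solution of the ODE w'(t) = F(w(t)) with w(0)=(z₁,z₂) is w(t) = (z₁, z₂·e^{−t/(1−z₁)}), which remains in 𝔹² for all t ≥ 0, and the resulting semigroup fixes every point of the slice {(ζ,0) : ζ ∈ 𝔻}. -/

import Mathlib

open Complex

/-- The open unit ball of ℂ². -/
def B2 : Set (ℂ × ℂ) := {z : ℂ × ℂ | ‖z.1‖^2 + ‖z.2‖^2 < 1}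

theorem example_generator_ball2
    (F : ℂ × ℂ → ℂ × ℂ)
    (hF : ∀ z : ℂ × ℂ, F z = (0, -z.2 / (1 - z.1))) :
    ∀ z ∈ B2, ∃ w : ℝ → ℂ × ℂ,
      (∀ t : ℝ, w t = (z.1, z.2 * Complex.exp (-(t : ℂ) / (1 - z.1)))) ∧
      w 0 = z ∧
      (∀ t : ℝ, HasDerivAt w (F (w t)) t) ∧
      (∀ t : ℝ, 0 ≤ t → w t ∈ B2) ∧
      (z.2 = 0 → ∀ t : ℝ, w t = z) := by
  intro z hz
  have hzB : ‖z.1‖^2 + ‖z.2‖^2 < 1 := hz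
  have hz1 : ‖z.1‖ < 1 := by
    nlinarith [norm_nonneg z.1, sq_nonneg ‖z.2‖]
  have hne : (1 : ℂ) - z.1 ≠ 0 := by
    intro h
    have h1 : z.1 = 1 := by linear_combination -h
    rw [h1] at hz1
    simp at hz1
  have hkey : ∀ s : ℝ, -(s : ℂ) / (1 - z.1) = (s : ℂ) * (-1 / (1 - z.1)) := by
    intro s; ring
  refine ⟨fun t => (z.1, z.2 * Complex.exp (-(t : ℂ) / (1 - z.1))), fun t => rfl,
    by simp, ?_, ?_, ?_⟩
  · intro t
    rw [hF]
    have h1 : HasDerivAt (fun _ : ℝ => z.1) (0 : ℂ) t := hasDerivAt_const _ _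
    have hexp : HasDerivAt (fun s : ℂ => Complex.exp (s * (-1 / (1 - z.1))))
        ((-1 / (1 - z.1)) * Complex.exp ((t:ℂ) * (-1 / (1 - z.1)))) (t : ℂ) := by
      have := (Complex.hasDerivAt_exp ((t:ℂ) * (-1 / (1 - z.1)))).comp (t:ℂ)
        ((hasDerivAt_id (t:ℂ)).mul_const (-1 / (1 - z.1)))
      simpa [mul_comm, Function.comp_def] using this
    have h2' : HasDerivAt (fun s : ℝ => Complex.exp ((s:ℂ) * (-1 / (1 - z.1))))
        ((-1 / (1 - z.1)) * Complex.exp ((t:ℂ) * (-1 / (1 - z.1)))) t := hexp.comp_ofReal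
    have h2 : HasDerivAt (fun s : ℝ => z.2 * Complex.exp ((s:ℂ) * (-1 / (1 - z.1))))
        (z.2 * ((-1 / (1 - z.1)) * Complex.exp ((t:ℂ) * (-1 / (1 - z.1))))) t :=
      h2'.const_mul z.2
    have hprod := h1.prodMk h2
    simp only [← hkey] at hprod
    convert hprod using 2
    field_simp
  · intro t ht
    show ‖z.1‖^2 + ‖z.2 * Complex.exp (-(t : ℂ) / (1 - z.1))‖^2 < 1
    have hle : ‖Complex.exp (-(t:ℂ) / (1 - z.1))‖ ≤ 1 := by
      rw [Complex.norm_exp]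
      have hd : (0:ℝ) < Complex.normSq (1 - z.1) := by rwa [Complex.normSq_pos]
      have hz1re : (0:ℝ) < (1 - z.1).re := by
        have : z.1.re ≤ ‖z.1‖ := Complex.re_le_norm z.1
        simp only [Complex.sub_re, Complex.one_re]
        linarith
      have hre : (-(t:ℂ) / (1 - z.1)).re = -t * (1 - z.1).re / Complex.normSq (1 - z.1) := by
        rw [Complex.div_re]
        simp
      have : (-(t:ℂ) / (1 - z.1)).re ≤ 0 := by
        rw [hre]
        apply div_nonpos_of_nonpos_of_nonneg _ hd.le
        nlinarith
      calc Real.exp (-(t:ℂ) / (1 - z.1)).re ≤ Real.exp 0 := Real.exp_le_exp.mpr this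
        _ = 1 := Real.exp_zero
    have h2 : ‖z.2 * Complex.exp (-(t:ℂ) / (1 - z.1))‖ ≤ ‖z.2‖ := by
      rw [norm_mul]
      nlinarith [norm_nonneg z.2]
    have hsq : ‖z.2 * Complex.exp (-(t:ℂ) / (1 - z.1))‖^2 ≤ ‖z.2‖^2 := by
      nlinarith [norm_nonneg (z.2 * Complex.exp (-(t:ℂ) / (1 - z.1)))]
    linarith
  · intro h0 t
    show (z.1, z.2 * _) = z
    rw [h0, zero_mul, ← h0]
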